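/- Let Δ = q · ∏_{n≥1} (1 − q^n)^{24} ∈ ℚ[[q]] and let D = q·d/dq be the formal derivation on ℚ[[q]]. Then D(Δ) = E_2 · Δ; equivalently, the logarithmic derivative of Δ equals E_2. -/

import Mathlib

open Finset

def sigma' (k n : ℕ) : ℕ := ∑ d ∈ n.divisors, d ^ k

noncomputable def E₂ : PowerSeries ℚ :=
  PowerSeries.mk fun n => if n = 0 then 1 else -24 * (sigma' 1 n : ℚ)

/-- The formal derivation `D = q·d/dq` on `ℚ[[q]]`, sending `Σ aₙ qⁿ` to `Σ n·aₙ qⁿ`. -/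
noncomputable def Dq (f : PowerSeries ℚ) : PowerSeries ℚ :=
  PowerSeries.mk fun n => (n : ℚ) * PowerSeries.coeff (R := ℚ) n f

/-- `Δ = q·∏_{n≥1}(1−q^n)^24 ∈ ℚ[[q]]`, the infinite product defined coefficientwise
via the (stabilizing) partial products. -/
noncomputable def Δq : PowerSeries ℚ :=
  PowerSeries.X *
    PowerSeries.mk (fun N =>
      PowerSeries.coeff (R := ℚ) N (∏ n ∈ Finset.range (N + 1), (1 - PowerSeries.X ^ (n + 1)) ^ 24))

namespace Aux

open PowerSeries

noncomputable def P (M : ℕ) : PowerSeries ℚ :=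
  ∏ n ∈ Finset.range M, (1 - X ^ (n + 1)) ^ 24

noncomputable def g (d : ℕ) : PowerSeries ℚ :=
  PowerSeries.mk fun k => if (d + 1) ∣ k then 1 else 0

lemma g_mul (d : ℕ) : (1 - X ^ (d + 1)) * g d = 1 := by
  ext k
  rw [sub_mul, one_mul, map_sub, coeff_X_pow_mul', g, coeff_mk]
  rcases Nat.eq_zero_or_pos k with rfl | hk
  · simp
  · rw [coeff_one, if_neg hk.ne']
    by_cases h : d + 1 ≤ k
    · rw [if_pos h, coeff_mk]
      have hiff : (d + 1) ∣ k ↔ (d + 1) ∣ k - (d + 1) := by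
        constructor
        · intro hd; exact Nat.dvd_sub hd dvd_rfl
        · intro hd
          have hk' : k = (k - (d + 1)) + (d + 1) := by omega
          rw [hk']; exact hd.add dvd_rfl
      by_cases hd : (d + 1) ∣ k
      · rw [if_pos hd, if_pos (hiff.mp hd), sub_self]
      · rw [if_neg hd, if_neg (fun h' => hd (hiff.mpr h')), sub_self]
    · rw [if_neg h, if_neg (fun hd => h (Nat.le_of_dvd hk hd)), sub_self]

noncomputable def S (M : ℕ) : PowerSeries ℚ :=
  ∑ n ∈ Finset.range M, PowerSeries.C (R := ℚ) (-24 * ((n : ℚ) + 1)) * (X ^ (n + 1) * g n)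

lemma Dq_eq (f : PowerSeries ℚ) : Dq f = X * d⁄dX ℚ f := by
  ext n
  cases n with
  | zero =>
      rw [Dq, coeff_mk]
      simp
  | succ k =>
      rw [Dq, coeff_mk, coeff_succ_X_mul, coeff_derivative]
      push_cast; ring

lemma key (M : ℕ) : Dq (P M) = S M * P M := by
  rw [Dq_eq]
  induction M with
  | zero => simp [P, S]
  | succ M ih =>
      have hf : P (M + 1) = P M * (1 - X ^ (M + 1)) ^ 24 := Finset.prod_range_succ _ _
      have hS : S (M + 1) =
          S M + PowerSeries.C (R := ℚ) (-24 * ((M : ℚ) + 1)) * (X ^ (M + 1) * g M) :=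
        Finset.sum_range_succ _ _
      have hg := g_mul M
      have hd := (d⁄dX ℚ).leibniz_pow (a := (1 - X ^ (M + 1) : PowerSeries ℚ)) 24
      rw [show (24 : ℕ) - 1 = 23 from rfl] at hd
      have hd1 : d⁄dX ℚ ((1 : PowerSeries ℚ) - X ^ (M + 1))
          = -(PowerSeries.C (R := ℚ) ((M : ℚ) + 1) * X ^ M) := by
        rw [map_sub, Derivation.map_one_eq_zero, zero_sub, Derivation.leibniz_pow, derivative_X]
        simp only [smul_eq_mul, nsmul_eq_mul, mul_one, Nat.add_sub_cancel]
        rw [← map_natCast (PowerSeries.C (R := ℚ)) (M + 1)]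
        push_cast
        ring
      have hC : PowerSeries.C (R := ℚ) (-24 * ((M : ℚ) + 1))
          = -24 * PowerSeries.C (R := ℚ) ((M : ℚ) + 1) := by
        rw [map_mul, map_neg, map_ofNat]
      rw [hf, hS, Derivation.leibniz, hd, hd1, hC]
      simp only [smul_eq_mul, nsmul_eq_mul]
      push_cast
      linear_combination ((1 - X ^ (M + 1) : PowerSeries ℚ) ^ 24) * ih
        + (24 * PowerSeries.C (R := ℚ) ((M : ℚ) + 1) * X ^ (M + 1) * P M
            * (1 - X ^ (M + 1)) ^ 23) * hg

lemma coeff_S_zero (M : ℕ) : PowerSeries.coeff (R := ℚ) 0 (S M) = 0 := by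
  rw [S, map_sum]
  refine Finset.sum_eq_zero fun n _ => ?_
  simp [coeff_zero_eq_constantCoeff, map_mul, map_pow]

lemma coeff_S (i M : ℕ) (h1 : 1 ≤ i) (h2 : i ≤ M) :
    PowerSeries.coeff (R := ℚ) i (S M) = -24 * (sigma' 1 i : ℚ) := by
  rw [S, map_sum]
  have hterm : ∀ n ∈ Finset.range M,
      PowerSeries.coeff (R := ℚ) i (PowerSeries.C (R := ℚ) (-24 * ((n : ℚ) + 1)) * (X ^ (n + 1) * g n))
        = if (n + 1) ∣ i then -24 * ((n : ℚ) + 1) else 0 := by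
    intro n _
    rw [coeff_C_mul, coeff_X_pow_mul']
    by_cases hd : (n + 1) ∣ i
    · have hle : n + 1 ≤ i := Nat.le_of_dvd h1 hd
      have hd' : (n + 1) ∣ i - (n + 1) := Nat.dvd_sub hd dvd_rfl
      rw [if_pos hle, g, coeff_mk, if_pos hd', if_pos hd, mul_one]
    · rw [if_neg hd]
      by_cases hle : n + 1 ≤ i
      · rw [if_pos hle, g, coeff_mk, if_neg, mul_zero]
        intro hd'
        apply hd
        have : i = (i - (n + 1)) + (n + 1) := by omega
        rw [this]; exact hd'.add dvd_rfl
      · rw [if_neg hle, mul_zero]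
  rw [Finset.sum_congr rfl hterm]
  have hdiv : (sigma' 1 i : ℚ) = ∑ d ∈ i.divisors, (d : ℚ) := by
    rw [sigma']
    push_cast
    simp
  rw [hdiv, Finset.mul_sum, ← Finset.sum_filter]
  refine Finset.sum_nbij' (fun n => n + 1) (fun d => d - 1) ?_ ?_ ?_ ?_ ?_
  · intro a ha
    simp only [Finset.mem_filter, Finset.mem_range] at ha
    exact Nat.mem_divisors.mpr ⟨ha.2, by omega⟩
  · intro d hd
    have hd' := Nat.mem_divisors.mp hd
    have hdpos : 0 < d := Nat.pos_of_mem_divisors hd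
    have hdle : d ≤ i := Nat.le_of_dvd h1 hd'.1
    simp only [Finset.mem_filter, Finset.mem_range]
    constructor
    · omega
    · have : d - 1 + 1 = d := by omega
      rw [this]; exact hd'.1
  · intro a _
    show a + 1 - 1 = a
    omega
  · intro d hd
    have hdpos : 0 < d := Nat.pos_of_mem_divisors hd
    show d - 1 + 1 = d
    omega
  · intro a _
    push_cast
    ring

lemma coeffP_succ (k M : ℕ) (h : k ≤ M) :
    PowerSeries.coeff (R := ℚ) k (P (M + 1)) = PowerSeries.coeff (R := ℚ) k (P M) := by
  obtain ⟨r, hr⟩ : (X : PowerSeries ℚ) ^ (M + 1) ∣ ((1 - X ^ (M + 1)) ^ 24 - 1) := by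
    have h1 := sub_dvd_pow_sub_pow (1 - X ^ (M + 1) : PowerSeries ℚ) 1 24
    have h2 : ((1 - X ^ (M + 1)) - 1 : PowerSeries ℚ) = -(X ^ (M + 1)) := by ring
    rw [h2, one_pow, neg_dvd] at h1
    exact h1
  have hP : P (M + 1) = P M + X ^ (M + 1) * (r * P M) := by
    rw [P, Finset.prod_range_succ, ← P]
    have h24 : ((1 - X ^ (M + 1)) ^ 24 : PowerSeries ℚ) = 1 + X ^ (M + 1) * r := by
      rw [← sub_eq_iff_eq_add']; exact hr
    rw [h24]; ring
  rw [hP, map_add, coeff_X_pow_mul', if_neg (by omega), add_zero]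

lemma coeffP_stable (k M M' : ℕ) (h : k ≤ M) (h' : M ≤ M') :
    PowerSeries.coeff (R := ℚ) k (P M') = PowerSeries.coeff (R := ℚ) k (P M) := by
  induction M', h' using Nat.le_induction with
  | base => rfl
  | succ n hn ih => rw [coeffP_succ k n (le_trans h hn), ih]

lemma coeff_Δ_zero : PowerSeries.coeff (R := ℚ) 0 Δq = 0 := by
  rw [Δq, coeff_zero_eq_constantCoeff, map_mul, constantCoeff_X, zero_mul]

lemma coeff_Δ_succ (j : ℕ) :
    PowerSeries.coeff (R := ℚ) (j + 1) Δq = PowerSeries.coeff (R := ℚ) j (P (j + 1)) := by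
  rw [Δq, coeff_succ_X_mul, coeff_mk]
  rfl

end Aux

/-- `D(Δ) = E₂ · Δ`: the logarithmic derivative of the discriminant is `E₂`. -/
theorem statement12 : Dq Δq = E₂ * Δq := by
  ext m
  cases m with
  | zero =>
      have h0 : PowerSeries.coeff (R := ℚ) 0 (E₂ * Δq) = 0 := by
        rw [PowerSeries.coeff_zero_eq_constantCoeff, map_mul, Δq, map_mul,
          PowerSeries.constantCoeff_X, zero_mul, mul_zero]
      rw [Dq, PowerSeries.coeff_mk, h0, Nat.cast_zero, zero_mul]
  | succ k =>
      have hc : ∀ j, j ≤ k →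
          PowerSeries.coeff (R := ℚ) (j + 1) Δq = PowerSeries.coeff (R := ℚ) j (Aux.P (k + 1)) := by
        intro j hj
        rw [Aux.coeff_Δ_succ, Aux.coeffP_stable j (j + 1) (k + 1) (by omega) (by omega)]
      have hE : ∀ i : ℕ, PowerSeries.coeff (R := ℚ) (i + 1) E₂ = -24 * (sigma' 1 (i + 1) : ℚ) := by
        intro i
        rw [E₂, PowerSeries.coeff_mk, if_neg (Nat.succ_ne_zero i)]
      have hkey : (k : ℚ) * PowerSeries.coeff (R := ℚ) k (Aux.P (k + 1)) =
          ∑ i ∈ Finset.range (k + 1),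
            PowerSeries.coeff (R := ℚ) i (Aux.S (k + 1)) *
              PowerSeries.coeff (R := ℚ) (k - i) (Aux.P (k + 1)) := by
        have h := congrArg (PowerSeries.coeff (R := ℚ) k) (Aux.key (k + 1))
        rwa [Dq, PowerSeries.coeff_mk, PowerSeries.coeff_mul,
          Finset.Nat.sum_antidiagonal_eq_sum_range_succ_mk] at h
      rw [Finset.sum_range_succ', Aux.coeff_S_zero, zero_mul, add_zero] at hkey
      rw [Dq, PowerSeries.coeff_mk, hc k le_rfl, PowerSeries.coeff_mul,
        Finset.Nat.sum_antidiagonal_eq_sum_range_succ_mk, Finset.sum_range_succ',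
        Finset.sum_range_succ]
      have hlast : PowerSeries.coeff (R := ℚ) (k + 1) E₂ *
          PowerSeries.coeff (R := ℚ) (k + 1 - (k + 1)) Δq = 0 := by
        rw [Nat.sub_self, Aux.coeff_Δ_zero, mul_zero]
      have hE0 : PowerSeries.coeff (R := ℚ) 0 E₂ = 1 := by
        rw [E₂, PowerSeries.coeff_mk, if_pos rfl]
      have hsum : ∑ i ∈ Finset.range k,
          PowerSeries.coeff (R := ℚ) (i + 1) E₂ * PowerSeries.coeff (R := ℚ) (k + 1 - (i + 1)) Δq =
          ∑ i ∈ Finset.range k,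
            PowerSeries.coeff (R := ℚ) (i + 1) (Aux.S (k + 1)) *
              PowerSeries.coeff (R := ℚ) (k - (i + 1)) (Aux.P (k + 1)) := by
        refine Finset.sum_congr rfl fun i hi => ?_
        have hik : i < k := Finset.mem_range.mp hi
        rw [hE, Aux.coeff_S (i + 1) (k + 1) (by omega) (by omega)]
        congr 1
        have h1 : k + 1 - (i + 1) = (k - (i + 1)) + 1 := by omega
        rw [h1, hc (k - (i + 1)) (by omega)]
      rw [hlast, add_zero, hsum, ← hkey, Nat.sub_zero, hE0, one_mul, hc k le_rfl]
      push_cast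
      ring
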